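/- Let S be a family of polynomials in n variables with complex coefficients and let Z = {x ∈ ℂⁿ : p(x) = 0 for all p ∈ S} be their common zero set. If Z is countable, then Z is finite. (Equivalently, an algebraic subset of ℂⁿ that is infinite is uncountable.) -/

import Mathlib

open MvPolynomial

set_option maxHeartbeats 1000000

private lemma smul_mk_aux (n : ℕ) (I : Ideal (MvPolynomial (Fin n) ℂ)) (a : ℂ)
    (y : MvPolynomial (Fin n) ℂ ⧸ I) :
    a • y = Ideal.Quotient.mkₐ ℂ I (MvPolynomial.C a) * y := by
  obtain ⟨p, rfl⟩ := Ideal.Quotient.mk_surjective y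
  have h1 : a • (Ideal.Quotient.mk I p) = Ideal.Quotient.mk I (a • p) := rfl
  rw [Ideal.Quotient.mkₐ_eq_mk, h1, ← map_mul, MvPolynomial.smul_eq_C_mul]

/-- A common zero set in `ℂⁿ` of a family of polynomials which is countable is in fact
finite: an infinite algebraic subset of `ℂⁿ` is uncountable. -/
theorem finite_of_countable_zero_set
    (n : ℕ) (S : Set (MvPolynomial (Fin n) ℂ))
    (hc : {x : Fin n → ℂ | ∀ p ∈ S, MvPolynomial.eval x p = 0}.Countable) :
    {x : Fin n → ℂ | ∀ p ∈ S, MvPolynomial.eval x p = 0}.Finite := by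
  set Z := {x : Fin n → ℂ | ∀ p ∈ S, MvPolynomial.eval x p = 0} with hZdef
  by_contra hfin
  have hZinf : Z.Infinite := hfin
  haveI : Uncountable ℂ := Complex.ofReal_injective.uncountable
  -- Step 1: some coordinate projection of Z is infinite
  have h1 : ∃ i : Fin n, ((fun x : Fin n → ℂ => x i) '' Z).Infinite := by
    by_contra h
    push_neg at h
    refine hfin (((Set.Finite.pi fun i => h i)).subset ?_)
    intro x hx
    exact fun i _ => ⟨x, hx, rfl⟩
  obtain ⟨i, hi⟩ := h1
  -- the complement of the projection is uncountable
  set T : Set ℂ := ((fun x : Fin n → ℂ => x i) '' Z)ᶜ with hTdef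
  have hTunc : ¬ T.Countable := by
    intro hTc
    have h2 : (Set.univ : Set ℂ).Countable := by
      have := (hc.image (fun x : Fin n → ℂ => x i)).union hTc
      rwa [Set.union_compl_self] at this
    rw [Set.countable_univ_iff] at h2
    exact (not_countable (α := ℂ)) h2
  -- the ideal
  set I0 : Ideal (MvPolynomial (Fin n) ℂ) := Ideal.span S with hI0
  have hZL : zeroLocus ℂ I0 = Z := zeroLocus_span S
  -- Step 2: for c outside the projection, X i - C c is invertible mod I0
  have key : ∀ c : ℂ, c ∈ T →
      IsUnit (Ideal.Quotient.mkₐ ℂ I0 (X i - C c)) := by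
    intro c hcT
    have hempty : zeroLocus ℂ (I0 ⊔ Ideal.span {X i - C c}) = ∅ := by
      ext x
      simp only [Set.mem_empty_iff_false, iff_false, mem_zeroLocus_iff]
      intro hx
      apply hcT
      have h2 := hx (X i - C c) (Ideal.mem_sup_right (Ideal.subset_span rfl))
      change eval x (X i - C c) = 0 at h2
      simp only [map_sub, eval_X, eval_C] at h2
      refine ⟨x, ?_, sub_eq_zero.mp h2⟩
      rw [← hZL]
      exact fun p hp => hx p (Ideal.mem_sup_left hp)
    have htop : (I0 ⊔ Ideal.span {X i - C c}) = ⊤ := by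
      have hns := vanishingIdeal_zeroLocus_eq_radical (K := ℂ) (I0 ⊔ Ideal.span {X i - C c})
      rw [hempty, vanishingIdeal_empty] at hns
      exact Ideal.radical_eq_top.mp hns.symm
    have hone : (1 : MvPolynomial (Fin n) ℂ) ∈ I0 ⊔ Ideal.span {X i - C c} := by
      rw [htop]; exact Submodule.mem_top
    obtain ⟨g, hg, h, hh, hgh⟩ := Submodule.mem_sup.mp hone
    obtain ⟨r, hr⟩ := Ideal.mem_span_singleton'.mp hh
    refine IsUnit.of_mul_eq_one (Ideal.Quotient.mkₐ ℂ I0 r) ?_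
    have hg0 : Ideal.Quotient.mkₐ ℂ I0 g = 0 := by
      rw [Ideal.Quotient.mkₐ_eq_mk, Ideal.Quotient.eq_zero_iff_mem]
      exact hg
    calc Ideal.Quotient.mkₐ ℂ I0 (X i - C c) * Ideal.Quotient.mkₐ ℂ I0 r
        = Ideal.Quotient.mkₐ ℂ I0 g + Ideal.Quotient.mkₐ ℂ I0 (r * (X i - C c)) := by
          rw [hg0, zero_add, ← map_mul, mul_comm]
      _ = Ideal.Quotient.mkₐ ℂ I0 1 := by rw [← map_add, hr, hgh]
      _ = 1 := map_one _
  -- the family of inverses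
  set fam : T → MvPolynomial (Fin n) ℂ ⧸ I0 := fun c => ↑((key c c.2).unit)⁻¹ with hfam
  have hfam_mul : ∀ c : T, fam c * Ideal.Quotient.mkₐ ℂ I0 (X i - C (c : ℂ)) = 1 := by
    intro c
    rw [hfam]
    rw [← (key c c.2).unit_spec]
    exact Units.inv_mul _
  -- Step 3: linear independence of the family
  have hli : LinearIndependent ℂ fam := by
    rw [linearIndependent_iff']
    intro s g hsum c₀ hc₀
    set v : T → MvPolynomial (Fin n) ℂ ⧸ I0 :=
      fun c => Ideal.Quotient.mkₐ ℂ I0 (X i - C (c : ℂ)) with hv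
    have hE : (∑ c ∈ s, g c • ∏ d ∈ s.erase c, v d) = 0 := by
      have h3 := congrArg (· * ∏ d ∈ s, v d) hsum
      simp only [zero_mul, Finset.sum_mul] at h3
      rw [← h3]
      apply Finset.sum_congr rfl
      intro c hcs
      rw [smul_mul_assoc, ← Finset.mul_prod_erase s v hcs, ← mul_assoc, hfam_mul c, one_mul]
    -- the corresponding polynomial lies in I0
    set P : MvPolynomial (Fin n) ℂ :=
      ∑ c ∈ s, C (g c) * ∏ d ∈ s.erase c, (X i - C (d : ℂ)) with hP
    have hmkP : Ideal.Quotient.mkₐ ℂ I0 P = 0 := by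
      rw [hP, map_sum, ← hE]
      apply Finset.sum_congr rfl
      intro c hcs
      rw [map_mul, map_prod, smul_mk_aux]
    have hPI : P ∈ I0 := by
      rwa [Ideal.Quotient.mkₐ_eq_mk, Ideal.Quotient.eq_zero_iff_mem] at hmkP
    -- thus the univariate polynomial q vanishes on the infinite projection
    set q : Polynomial ℂ :=
      ∑ c ∈ s, Polynomial.C (g c) * ∏ d ∈ s.erase c, (Polynomial.X - Polynomial.C (d : ℂ))
      with hq
    have hqeval : ∀ t : ℂ, q.eval t = ∑ c ∈ s, g c * ∏ d ∈ s.erase c, (t - (d : ℂ)) := by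
      intro t
      rw [hq, Polynomial.eval_finset_sum]
      apply Finset.sum_congr rfl
      intro c _
      rw [Polynomial.eval_mul, Polynomial.eval_C, Polynomial.eval_prod]
      congr 1
      apply Finset.prod_congr rfl
      intro d _
      rw [Polynomial.eval_sub, Polynomial.eval_X, Polynomial.eval_C]
    have hroot : ∀ z ∈ Z, q.eval (z i) = 0 := by
      intro z hz
      have hzZL : z ∈ zeroLocus ℂ I0 := by rw [hZL]; exact hz
      have hPz : eval z P = 0 := hzZL P hPI
      rw [hqeval]
      rw [hP] at hPz
      rw [← hPz, map_sum]
      apply Finset.sum_congr rfl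
      intro c _
      rw [map_mul, eval_C, map_prod]
      congr 1
      apply Finset.prod_congr rfl
      intro d _
      rw [map_sub, eval_X, eval_C]
    have hq0 : q = 0 := by
      apply Polynomial.eq_zero_of_infinite_isRoot
      apply hi.mono
      rintro t ⟨z, hz, rfl⟩
      exact hroot z hz
    -- evaluate at c₀
    have hqc₀ : q.eval (c₀ : ℂ) = g c₀ * ∏ d ∈ s.erase c₀, ((c₀ : ℂ) - (d : ℂ)) := by
      rw [hqeval]
      apply Finset.sum_eq_single_of_mem c₀ hc₀
      intro c hcs hcne
      have hc₀mem : c₀ ∈ s.erase c := Finset.mem_erase.mpr ⟨hcne.symm, hc₀⟩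
      rw [Finset.prod_eq_zero hc₀mem (by ring), mul_zero]
    have hprod : (∏ d ∈ s.erase c₀, ((c₀ : ℂ) - (d : ℂ))) ≠ 0 := by
      rw [Finset.prod_ne_zero_iff]
      intro d hd
      have hne : d ≠ c₀ := Finset.ne_of_mem_erase hd
      exact sub_ne_zero.mpr fun h => hne (Subtype.ext h.symm)
    have h4 : g c₀ * ∏ d ∈ s.erase c₀, ((c₀ : ℂ) - (d : ℂ)) = 0 := by
      rw [← hqc₀, hq0, Polynomial.eval_zero]
    exact (mul_eq_zero.mp h4).resolve_right hprod
  -- Step 4: cardinality contradiction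
  have hcard : Cardinal.mk T ≤ Module.rank ℂ (MvPolynomial (Fin n) ℂ ⧸ I0) :=
    hli.cardinal_le_rank
  have hrankA : Module.rank ℂ (MvPolynomial (Fin n) ℂ ⧸ I0)
      ≤ Module.rank ℂ (MvPolynomial (Fin n) ℂ) :=
    LinearMap.rank_le_of_surjective (Ideal.Quotient.mkₐ ℂ I0).toLinearMap
      (Ideal.Quotient.mkₐ_surjective ℂ I0)
  have hrankR : Module.rank ℂ (MvPolynomial (Fin n) ℂ) ≤ Cardinal.aleph0 := by
    rw [MvPolynomial.rank_eq]
    exact Cardinal.mk_le_aleph0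
  have h5 : Cardinal.mk T ≤ Cardinal.aleph0 := hcard.trans (hrankA.trans hrankR)
  rw [Cardinal.mk_le_aleph0_iff] at h5
  exact hTunc (Set.countable_coe_iff.mp h5)
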